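/- Let H and K be finite groups and let G = H × K be their direct product. Then for every (x, y) ∈ G, Sol_G((x, y)) = Sol_H(x) × Sol_K(y) (the Cartesian product of the two solvabilizer sets). -/

import Mathlib

open scoped MatrixGroups

/-- The solvabilizer of `x` in `G`:
`Sol_G(x) = {y : the subgroup generated by x and y is solvable}`. -/
def Sol {G : Type*} [Group G] (x : G) : Set G :=
  {y | IsSolvable ↥(Subgroup.closure ({x, y} : Set G))}

/-- The solvabilizer number `α(G)`: the minimum cardinality of a set `X` of elements lying
outside the solvable radical (equivalently, outside every solvable normal subgroup)
whose solvabilizers cover `G`. -/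
noncomputable def solvNumber (G : Type*) [Group G] : ℕ :=
  sInf {n : ℕ | ∃ X : Finset G,
    (∀ x ∈ X, ¬∃ N : Subgroup G, N.Normal ∧ IsSolvable ↥N ∧ x ∈ N) ∧
    X.card = n ∧ ∀ g : G, ∃ x ∈ X, g ∈ Sol x}

/-- In a direct product of finite groups, the solvabilizer of a pair is the Cartesian
product of the solvabilizers of the components. -/
theorem stmt8 {H K : Type*} [Group H] [Group K] [Finite H] [Finite K] (x : H) (y : K) :
    Sol ((x, y) : H × K) = Sol x ×ˢ Sol y := by
  ext ⟨a, b⟩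
  simp only [Sol, Set.mem_setOf_eq, Set.mem_prod]
  constructor
  · intro h
    constructor
    · have h1 : Subgroup.map (MonoidHom.fst H K) (Subgroup.closure {(x, y), (a, b)}) =
          Subgroup.closure {x, a} := by
        rw [MonoidHom.map_closure]; congr 1; simp [Set.image_insert_eq]
      rw [← h1]
      haveI : Group.IsSolvable ↥(Subgroup.closure {((x, y) : H × K), (a, b)}) := h
      exact solvable_of_surjective
        (MonoidHom.subgroupMap_surjective (MonoidHom.fst H K) _)
    · have h1 : Subgroup.map (MonoidHom.snd H K) (Subgroup.closure {(x, y), (a, b)}) =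
          Subgroup.closure {y, b} := by
        rw [MonoidHom.map_closure]; congr 1; simp [Set.image_insert_eq]
      rw [← h1]
      haveI : Group.IsSolvable ↥(Subgroup.closure {((x, y) : H × K), (a, b)}) := h
      exact solvable_of_surjective
        (MonoidHom.subgroupMap_surjective (MonoidHom.snd H K) _)
  · rintro ⟨h1, h2⟩
    haveI : Group.IsSolvable ↥(Subgroup.closure {x, a}) := h1
    haveI : Group.IsSolvable ↥(Subgroup.closure {y, b}) := h2
    have hP : IsSolvable ↥((Subgroup.closure {x, a}).prod (Subgroup.closure {y, b})) :=
      solvable_of_solvable_injective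
        (f := (Subgroup.prodEquiv (Subgroup.closure {x, a})
          (Subgroup.closure {y, b})).toMonoidHom)
        (Subgroup.prodEquiv (Subgroup.closure {x, a}) (Subgroup.closure {y, b})).injective
    have hle : Subgroup.closure {((x, y) : H × K), (a, b)} ≤
        (Subgroup.closure {x, a}).prod (Subgroup.closure {y, b}) := by
      rw [Subgroup.closure_le]
      rintro ⟨u, v⟩ hu
      rcases hu with h | h <;> simp_all [Subgroup.mem_prod] <;>
        exact ⟨Subgroup.subset_closure (by simp), Subgroup.subset_closure (by simp)⟩
    haveI : Group.IsSolvable ↥((Subgroup.closure {x, a}).prod (Subgroup.closure {y, b})) := hP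
    exact solvable_of_solvable_injective (Subgroup.inclusion_injective hle)
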